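/- Lemma B.3 (asymptotic description of the kernel matrix, extension of El Karoui). Assume the kernel satisfies Assumptions (A.1)–(A.3), the inputs follow the covariance or sphere model in the high-dimensional regime tr(Σ_{d(n)})/n^β → c > 0, the bandwidth is τ = tr(Σ_d), z_i = x_i/√τ, and set m = ⌊2/β⌋. Let M = (g(1,1,1) − Σ_{q=0}^{m} g_q(1,1))·I_n + Σ_{q=0}^{m} (ZᵀZ)^{∘q} ∘ K_{g_q}, where Z is the d×n matrix with columns z_i, ∘ denotes the Hadamard (entrywise) product, (ZᵀZ)^{∘q} the q-fold Hadamard power, and (K_{g_q})_{ij} = g_q(‖z_i‖₂², ‖z_j‖₂²) (each K_{g_q} positive semidefinite). Then for every γ > 0 and fixed ε > 0 there exists N such that for all n ≥ N and every sample satisfying max_{i,j≤n} |x_iᵀx_j/tr(Σ_d) − δ_{ij}| ≤ n^{−β/2}(log n)^{(1+ε)/2} (the event E_X), the kernel matrix K with K_{ij} = g(‖z_i‖₂², ‖z_j‖₂², z_iᵀz_j) satisfies ‖K − M‖_op ≤ γ; i.e. ‖K − M‖_op → 0 conditioned on E_X. -/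

import Mathlib

open MeasureTheory ProbabilityTheory Filter Matrix
open scoped Topology NNReal ENNReal

noncomputable section
def dotp {d : ℕ} (x y : Fin d → ℝ) : ℝ := ∑ i, x i * y i
def sqnorm {d : ℕ} (x : Fin d → ℝ) : ℝ := dotp x x
def IsCoordDist (ν : Measure ℝ) : Prop :=
  ν = gaussianReal 0 1 ∨
    (IsProbabilityMeasure ν ∧ (∃ C : ℝ, ∀ᵐ x ∂ν, |x| ≤ C) ∧
      (∫ x, x ∂ν) = 0 ∧ (∫ x, x ^ 2 ∂ν) = 1)
/-- The positive semidefinite square root of a positive semidefinite matrix, as defined in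
Mathlib (Dec 2024) as `Matrix.PosSemidef.sqrt`; removed from current Mathlib. -/
def Matrix.PosSemidef.sqrt {n : Type*} [Fintype n] [DecidableEq n] {A : Matrix n n ℝ}
    (hA : A.PosSemidef) : Matrix n n ℝ :=
  hA.1.eigenvectorUnitary.1 * diagonal ((↑) ∘ (fun x : ℝ => Real.sqrt x) ∘ hA.1.eigenvalues) *
    (star hA.1.eigenvectorUnitary : Matrix n n ℝ)
def IsCovarianceModel {d : ℕ} (S : Matrix (Fin d) (Fin d) ℝ) (hS : S.PosSemidef)
    (μ : Measure (Fin d → ℝ)) : Prop :=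
  ∃ ν : Measure ℝ, IsCoordDist ν ∧
    μ = (Measure.pi fun _ : Fin d => ν).map (fun w => hS.sqrt.mulVec w)
def IsSphereModel {d : ℕ} (S : Matrix (Fin d) (Fin d) ℝ) (hS : S.PosSemidef)
    (μ : Measure (Fin d → ℝ)) : Prop :=
  ∃ μZ : Measure (Fin d → ℝ), IsCovarianceModel S hS μZ ∧
    μ = μZ.map (fun z => (Real.sqrt S.trace / Real.sqrt (sqnorm z)) • z)
def OpNormOne {d : ℕ} (S : Matrix (Fin d) (Fin d) ℝ) : Prop :=
  IsGreatest {r : ℝ | ∃ x : Fin d → ℝ, sqnorm x = 1 ∧ dotp x (S.mulVec x) = r} 1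
def IsPSDKernel1 (q : ℝ → ℝ → ℝ) : Prop :=
  ∀ (N : ℕ) (u : Fin N → ℝ), (Matrix.of fun a b => q (u a) (u b)).PosSemidef
def AssumptionA1 (g : ℝ → ℝ → ℝ → ℝ) (gj : ℕ → ℝ → ℝ → ℝ) : Prop :=
  (∃ δ > (0:ℝ), ∀ u v t : ℝ, u ∈ Set.Icc (1 - δ) (1 + δ) → v ∈ Set.Icc (1 - δ) (1 + δ) →
      |t| ≤ 1 + δ → HasSum (fun j : ℕ => gj j u v * t ^ j) (g u v t)) ∧
    ∀ j, IsPSDKernel1 (gj j)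
def AssumptionA2 (g : ℝ → ℝ → ℝ → ℝ) : Prop :=
  ∃ δL > (0:ℝ), ∃ L : ℝ≥0, LipschitzOnWith L (fun u => g u u u) (Set.Icc (1 - δL) (1 + δL))
def AssumptionA3 (β : ℝ) (gj : ℕ → ℝ → ℝ → ℝ) : Prop :=
  (∀ i ≤ ⌊2 / β⌋₊, ∃ U ∈ 𝓝 ((1:ℝ), (1:ℝ)),
      ContDiffOn ℝ (⌊2 / β⌋₊ + 1 - i) (fun p : ℝ × ℝ => gj i p.1 p.2) U) ∧
    ∃ J, ⌊2 / β⌋₊ < J ∧ 0 < gj J 1 1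
def kermap {d : ℕ} (g : ℝ → ℝ → ℝ → ℝ) (τ : ℝ) (x y : Fin d → ℝ) : ℝ :=
  g (sqnorm x / τ) (sqnorm y / τ) (dotp x y / τ)
def kernelMatrix {d n : ℕ} (k : (Fin d → ℝ) → (Fin d → ℝ) → ℝ)
    (xs : Fin n → Fin d → ℝ) : Matrix (Fin n) (Fin n) ℝ :=
  Matrix.of fun i j => k (xs i) (xs j)
def ridgeEstimator {d n : ℕ} (k : (Fin d → ℝ) → (Fin d → ℝ) → ℝ) (lam : ℝ)
    (fstar : (Fin d → ℝ) → ℝ) (xs : Fin n → Fin d → ℝ) (x : Fin d → ℝ) : ℝ :=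
  dotProduct (fun i => fstar (xs i))
    (((kernelMatrix k xs + lam • (1 : Matrix (Fin n) (Fin n) ℝ))⁻¹).mulVec
      (fun i => k (xs i) x))
def biasOf {d : ℕ} (est : (Fin d → ℝ) → ℝ) (fstar : (Fin d → ℝ) → ℝ)
    (μ : Measure (Fin d → ℝ)) : ℝ :=
  ∫ x, (est x - fstar x) ^ 2 ∂μ
def polyApproxError (d m : ℕ) (f : (Fin d → ℝ) → ℝ) (μ : Measure (Fin d → ℝ)) : ℝ :=
  ⨅ p : {p : MvPolynomial (Fin d) ℝ // p.totalDegree ≤ m},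
    ∫ x, (f x - MvPolynomial.eval x (p : MvPolynomial (Fin d) ℝ)) ^ 2 ∂μ
def alphaExpG (α : ℝ) (g : ℝ → ℝ → ℝ → ℝ) : Prop :=
  ∀ u v t : ℝ, g u v t = Real.exp (-(u + v - 2 * t) ^ (α / 2))


section AuxLemmas

open Real Asymptotics Finset

private lemma aux_rpow_log_tendsto {a : ℝ} (b : ℝ) (ha : a < 0) :
    Tendsto (fun x : ℝ => x ^ a * Real.log x ^ b) atTop (𝓝 0) := by
  have h1 : (fun x : ℝ => Real.log x ^ b) =o[atTop] fun x : ℝ => x ^ (-a / 2) :=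
    isLittleO_log_rpow_rpow_atTop b (by linarith)
  have h2 : (fun x : ℝ => x ^ a * Real.log x ^ b) =o[atTop]
      fun x : ℝ => x ^ a * x ^ (-a / 2) :=
    (Asymptotics.isBigO_refl (fun x : ℝ => x ^ a) atTop).mul_isLittleO h1
  have h3 : (fun x : ℝ => x ^ a * x ^ (-a / 2)) =ᶠ[atTop] fun x : ℝ => x ^ (a / 2) := by
    filter_upwards [eventually_gt_atTop (0 : ℝ)] with x hx
    rw [← Real.rpow_add hx]
    congr 1
    ring
  have h4 : Tendsto (fun x : ℝ => x ^ (a / 2)) atTop (𝓝 0) := by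
    have := tendsto_rpow_neg_atTop (y := -(a / 2)) (by linarith)
    simpa using this
  exact (h2.trans_eventuallyEq h3).isBigO.trans_tendsto h4

private lemma psd_diag_nonneg {q : ℝ → ℝ → ℝ} (hq : IsPSDKernel1 q) (u : ℝ) :
    0 ≤ q u u := by
  have h := (hq 1 ![u]).dotProduct_mulVec_nonneg ![1]
  simpa [Matrix.mulVec, dotProduct] using h

private lemma psd_offdiag_bound {q : ℝ → ℝ → ℝ} (hq : IsPSDKernel1 q) (u v : ℝ) :
    |q u v| ≤ (q u u + q v v) / 2 := by
  have h1 := (hq 2 ![u, v]).dotProduct_mulVec_nonneg ![1, 1]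
  have h2 := (hq 2 ![u, v]).dotProduct_mulVec_nonneg ![1, -1]
  have hsym := congrFun (congrFun ((hq 2 ![u, v]).1) 0) 1
  simp [Matrix.mulVec, dotProduct, Fin.sum_univ_two, Matrix.conjTranspose_apply] at h1 h2 hsym
  rw [abs_le]
  constructor <;> nlinarith [h1, h2, hsym]

private lemma tail_bound {g : ℝ → ℝ → ℝ → ℝ} {gj : ℕ → ℝ → ℝ → ℝ} {δ : ℝ} (hδ : 0 < δ)
    (hsum : ∀ u v t : ℝ, u ∈ Set.Icc (1 - δ) (1 + δ) → v ∈ Set.Icc (1 - δ) (1 + δ) →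
      |t| ≤ 1 + δ → HasSum (fun j : ℕ => gj j u v * t ^ j) (g u v t))
    {C : ℝ} (hC : ∀ (q : ℕ) (u v : ℝ), u ∈ Set.Icc (1 - δ) (1 + δ) →
      v ∈ Set.Icc (1 - δ) (1 + δ) → |gj q u v| ≤ C)
    (m : ℕ) {u v t : ℝ} (hu : u ∈ Set.Icc (1 - δ) (1 + δ))
    (hv : v ∈ Set.Icc (1 - δ) (1 + δ)) (ht : |t| ≤ 1 / 2) :
    |g u v t - ∑ q ∈ Finset.range (m + 1), gj q u v * t ^ q| ≤ 2 * C * |t| ^ (m + 1) := by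
  have hC0 : 0 ≤ C := le_trans (abs_nonneg _) (hC 0 u v hu hv)
  have hS := hsum u v t hu hv (ht.trans (by linarith))
  have hS' : HasSum (fun q : ℕ => gj (q + (m + 1)) u v * t ^ (q + (m + 1)))
      (g u v t - ∑ q ∈ Finset.range (m + 1), gj q u v * t ^ q) :=
    (hasSum_nat_add_iff' (m + 1)).mpr hS
  have htlt : |t| < 1 := lt_of_le_of_lt ht (by norm_num)
  have hgeo : HasSum (fun q : ℕ => C * |t| ^ (m + 1) * |t| ^ q)
      (C * |t| ^ (m + 1) * (1 - |t|)⁻¹) :=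
    (hasSum_geometric_of_lt_one (abs_nonneg t) htlt).mul_left _
  have hbound : ∀ q : ℕ, |gj (q + (m + 1)) u v * t ^ (q + (m + 1))| ≤
      C * |t| ^ (m + 1) * |t| ^ q := by
    intro q
    rw [abs_mul, abs_pow]
    calc |gj (q + (m + 1)) u v| * |t| ^ (q + (m + 1))
        ≤ C * |t| ^ (q + (m + 1)) :=
          mul_le_mul_of_nonneg_right (hC _ u v hu hv) (by positivity)
      _ = C * |t| ^ (m + 1) * |t| ^ q := by rw [pow_add]; ring
  have h1 : g u v t - ∑ q ∈ Finset.range (m + 1), gj q u v * t ^ q ≤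
      C * |t| ^ (m + 1) * (1 - |t|)⁻¹ :=
    hasSum_le (fun q => (le_abs_self _).trans (hbound q)) hS' hgeo
  have h2 : -(C * |t| ^ (m + 1) * (1 - |t|)⁻¹) ≤
      g u v t - ∑ q ∈ Finset.range (m + 1), gj q u v * t ^ q :=
    hasSum_le (fun q => neg_le_of_abs_le (hbound q)) hgeo.neg hS'
  have hpos : (0:ℝ) < 1 - |t| := by linarith
  have hinv : (1 - |t|)⁻¹ ≤ 2 := by
    rw [inv_le_iff_one_le_mul₀ hpos]
    linarith
  have habs : |g u v t - ∑ q ∈ Finset.range (m + 1), gj q u v * t ^ q| ≤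
      C * |t| ^ (m + 1) * (1 - |t|)⁻¹ := abs_le.mpr ⟨h2, h1⟩
  have hfin : C * |t| ^ (m + 1) * (1 - |t|)⁻¹ ≤ C * |t| ^ (m + 1) * 2 :=
    mul_le_mul_of_nonneg_left hinv (by positivity)
  nlinarith [habs, hfin]

private lemma quadform_bound {n : ℕ} (A : Matrix (Fin n) (Fin n) ℝ) (v : Fin n → ℝ)
    (a b : ℝ) (hb : 0 ≤ b) (hA : ∀ i j, |A i j| ≤ if i = j then a else b) :
    |dotProduct v (A.mulVec v)| ≤ (a + n * b) * ∑ i, v i ^ 2 := by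
  have expand : dotProduct v (A.mulVec v) = ∑ i, ∑ j, v i * (A i j * v j) := by
    simp [dotProduct, Matrix.mulVec, Finset.mul_sum]
  have key : ∀ i j : Fin n, |v i * (A i j * v j)| ≤
      (if i = j then a * v i ^ 2 else 0) + b * (|v i| * |v j|) := by
    intro i j
    have hij := hA i j
    by_cases h : i = j
    · subst h
      rw [if_pos rfl] at hij ⊢
      have h1 : |v i * (A i i * v i)| ≤ a * v i ^ 2 := by
        rw [abs_mul, abs_mul, mul_comm (|v i|), mul_assoc]
        calc |A i i| * (|v i| * |v i|) ≤ a * (|v i| * |v i|) :=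
            mul_le_mul_of_nonneg_right hij (by positivity)
          _ = a * v i ^ 2 := by rw [← abs_mul, abs_mul_self]; ring
      have hb' : 0 ≤ b * (|v i| * |v i|) := by positivity
      linarith
    · rw [if_neg h] at hij ⊢
      rw [abs_mul, abs_mul]
      calc |v i| * (|A i j| * |v j|) ≤ |v i| * (b * |v j|) := by
            apply mul_le_mul_of_nonneg_left _ (abs_nonneg _)
            exact mul_le_mul_of_nonneg_right hij (abs_nonneg _)
        _ = 0 + b * (|v i| * |v j|) := by ring
  have cs : (∑ i, |v i|) * (∑ i, |v i|) ≤ (n : ℝ) * ∑ i, v i ^ 2 := by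
    calc (∑ i, |v i|) * (∑ i, |v i|) = (∑ i, |v i|) ^ 2 := (sq _).symm
      _ ≤ (Finset.univ.card : ℝ) * ∑ i, |v i| ^ 2 := by
          exact_mod_cast sq_sum_le_card_mul_sum_sq (s := (Finset.univ : Finset (Fin n)))
            (f := fun i => |v i|)
      _ = (n : ℝ) * ∑ i, v i ^ 2 := by simp [sq_abs]
  calc |dotProduct v (A.mulVec v)|
      ≤ ∑ i, ∑ j, |v i * (A i j * v j)| := by
        rw [expand]
        exact (Finset.abs_sum_le_sum_abs _ _).trans
          (Finset.sum_le_sum fun i _ => Finset.abs_sum_le_sum_abs _ _)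
    _ ≤ ∑ i, ∑ j, ((if i = j then a * v i ^ 2 else 0) + b * (|v i| * |v j|)) :=
        Finset.sum_le_sum fun i _ => Finset.sum_le_sum fun j _ => key i j
    _ = (∑ i, a * v i ^ 2) + ∑ i, ∑ j, b * (|v i| * |v j|) := by
        simp only [Finset.sum_add_distrib]
        congr 1
        exact Finset.sum_congr rfl fun i _ => by simp
    _ = a * (∑ i, v i ^ 2) + b * ((∑ i, |v i|) * (∑ i, |v i|)) := by
        rw [← Finset.mul_sum]
        congr 1
        calc ∑ i, ∑ j, b * (|v i| * |v j|) = ∑ i, b * (|v i| * ∑ j, |v j|) := by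
              refine Finset.sum_congr rfl fun i _ => ?_
              rw [← Finset.mul_sum, ← Finset.mul_sum]
          _ = b * ((∑ i, |v i|) * (∑ i, |v i|)) := by
              rw [← Finset.mul_sum, ← Finset.sum_mul]
    _ ≤ a * (∑ i, v i ^ 2) + b * ((n : ℝ) * ∑ i, v i ^ 2) := by
        have := mul_le_mul_of_nonneg_left cs hb
        linarith
    _ = (a + n * b) * ∑ i, v i ^ 2 := by ring

end AuxLemmas

theorem asymptotic_description_of_kernel_matrix
    -- high-dimensional regime
    (β c : ℝ) (hβ : 0 < β) (hc : 0 < c)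
    (d : ℕ → ℕ)
    (S : ∀ n, Matrix (Fin (d n)) (Fin (d n)) ℝ)
    (hS : ∀ n, (S n).PosSemidef) (hSnorm : ∀ n, OpNormOne (S n))
    (hreg : Tendsto (fun n => (S n).trace / (n : ℝ) ^ β) atTop (𝓝 c))
    -- the kernel satisfies Assumptions (A.1)-(A.3)
    (g : ℝ → ℝ → ℝ → ℝ) (gj : ℕ → ℝ → ℝ → ℝ)
    (hgcont : Continuous fun p : ℝ × ℝ × ℝ => g p.1 p.2.1 p.2.2)
    (hker : AssumptionA1 g gj ∧ AssumptionA2 g ∧ AssumptionA3 β gj) :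
    -- conclusion (with m = ⌊2/β⌋, z_i = x_i/√(tr Σ)): on the event E_X, for n large,
    -- ‖K − M‖_op ≤ γ, where
    -- M = (g(1,1,1) − Σ_{q≤m} g_q(1,1))·I + Σ_{q≤m} (ZᵀZ)^{∘q} ∘ K_{g_q}
    ∀ γ : ℝ, 0 < γ → ∀ ε : ℝ, 0 < ε → ∃ N : ℕ, ∀ n ≥ N,
      ∀ xs : Fin n → (Fin (d n) → ℝ),
        -- the concentration event E_X for the sample
        (∀ i j : Fin n,
          |dotp (xs i) (xs j) / (S n).trace - (if i = j then (1:ℝ) else 0)| ≤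
            (n : ℝ) ^ (-(β / 2)) * Real.log n ^ ((1 + ε) / 2)) →
        -- operator-norm bound for the symmetric matrix K − M, via quadratic forms
        ∀ v : Fin n → ℝ,
          |dotProduct v
              (((kernelMatrix (kermap g 1) (fun i => (Real.sqrt (S n).trace)⁻¹ • xs i)) -
                ((Matrix.of fun i j : Fin n =>
                  (if i = j then
                    g 1 1 1 - ∑ q ∈ Finset.range (⌊2 / β⌋₊ + 1), gj q 1 1
                  else 0) +
                  ∑ q ∈ Finset.range (⌊2 / β⌋₊ + 1),
                    (dotp ((Real.sqrt (S n).trace)⁻¹ • xs i)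
                        ((Real.sqrt (S n).trace)⁻¹ • xs j)) ^ q *
                      gj q (sqnorm ((Real.sqrt (S n).trace)⁻¹ • xs i))
                        (sqnorm ((Real.sqrt (S n).trace)⁻¹ • xs j))))).mulVec v)| ≤
            γ * (∑ i, v i ^ 2) := by
  obtain ⟨⟨⟨δ, hδ, hsum⟩, hpsd⟩, -, hA3cont, -⟩ := hker
  intro γ hγ ε hε
  set m := ⌊2 / β⌋₊ with hm
  -- a uniform bound `C` for all the coefficient kernels on the relevant square
  obtain ⟨u0, hu0, hmax⟩ := isCompact_Icc.exists_isMaxOn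
    (⟨1, by constructor <;> linarith⟩ : Set.Nonempty (Set.Icc (1 - δ) (1 + δ)))
    ((hgcont.comp (continuous_id.prodMk
      (continuous_id.prodMk continuous_const))).continuousOn
      : ContinuousOn (fun u : ℝ => g u u (1 + δ)) _)
  set C : ℝ := max (g u0 u0 (1 + δ)) 0 with hCdef
  have hC0 : 0 ≤ C := le_max_right _ _
  have hdiagC : ∀ (q : ℕ) (u : ℝ), u ∈ Set.Icc (1 - δ) (1 + δ) → gj q u u ≤ C := by
    intro q u hu
    have h0 : ∀ j : ℕ, 0 ≤ gj j u u * (1 + δ) ^ j := fun j =>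
      mul_nonneg (psd_diag_nonneg (hpsd j) u) (pow_nonneg (by linarith) _)
    have h1 : gj q u u * (1 + δ) ^ q ≤ g u u (1 + δ) :=
      le_hasSum (hsum u u (1 + δ) hu hu (le_of_eq (abs_of_pos (by linarith)))) q
        fun j _ => h0 j
    have h2 : gj q u u ≤ gj q u u * (1 + δ) ^ q :=
      le_mul_of_one_le_right (psd_diag_nonneg (hpsd q) u) (one_le_pow₀ (by linarith))
    exact le_trans (le_trans h2 h1) (le_trans (hmax hu) (le_max_left _ _))
  have hC : ∀ (q : ℕ) (u v : ℝ), u ∈ Set.Icc (1 - δ) (1 + δ) →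
      v ∈ Set.Icc (1 - δ) (1 + δ) → |gj q u v| ≤ C := by
    intro q u v hu hv
    have h := psd_offdiag_bound (hpsd q) u v
    have hu' := hdiagC q u hu
    have hv' := hdiagC q v hv
    linarith
  -- continuity of the diagonal defect at 1
  have hfcont : ContinuousAt
      (fun u : ℝ => g u u u - ∑ q ∈ Finset.range (m + 1), u ^ q * gj q u u) 1 := by
    apply ContinuousAt.sub
    · exact (hgcont.comp (continuous_id.prodMk
        (continuous_id.prodMk continuous_id))).continuousAt
    · have : ∀ q ∈ Finset.range (m + 1), ContinuousAt (fun u : ℝ => u ^ q * gj q u u) 1 := by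
        intro q hq
        have hq' : q ≤ ⌊2 / β⌋₊ := by
          rw [← hm]; exact Nat.lt_succ_iff.mp (Finset.mem_range.mp hq)
        obtain ⟨U, hU, hcd⟩ := hA3cont q hq'
        have hgq : ContinuousAt (fun p : ℝ × ℝ => gj q p.1 p.2) (1, 1) :=
          (hcd.contDiffAt hU).continuousAt
        have hgq' : ContinuousAt (fun u : ℝ => gj q u u) 1 := by
          have hd : ContinuousAt (fun u : ℝ => ((u, u) : ℝ × ℝ)) 1 :=
            (continuous_id.prodMk continuous_id).continuousAt
          exact ContinuousAt.comp (f := fun u : ℝ => ((u, u) : ℝ × ℝ)) hgq hd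
        exact (continuous_pow q).continuousAt.mul hgq'
      exact tendsto_finset_sum _ this
  obtain ⟨ρ, hρ, hball⟩ := Metric.continuousAt_iff.mp hfcont (γ / 2) (by linarith)
  have hdiagbound : ∀ x : ℝ, |x - 1| < ρ →
      |g x x x - ((g 1 1 1 - ∑ q ∈ Finset.range (m + 1), gj q 1 1)
        + ∑ q ∈ Finset.range (m + 1), x ^ q * gj q x x)| ≤ γ / 2 := by
    intro x hx
    have h := hball (by rw [Real.dist_eq]; exact hx)
    rw [Real.dist_eq] at h
    have e : (fun u : ℝ => g u u u - ∑ q ∈ Finset.range (m + 1), u ^ q * gj q u u) x -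
        (fun u : ℝ => g u u u - ∑ q ∈ Finset.range (m + 1), u ^ q * gj q u u) 1
        = g x x x - ((g 1 1 1 - ∑ q ∈ Finset.range (m + 1), gj q 1 1)
          + ∑ q ∈ Finset.range (m + 1), x ^ q * gj q x x) := by
      simp only [one_pow, one_mul]
      ring
    rw [e] at h
    exact le_of_lt h
  -- quantitative limits
  have hexp : (1:ℝ) < β / 2 * ((m : ℝ) + 1) := by
    have hmgt : 2 / β < (m : ℝ) + 1 := by
      rw [hm]; push_cast; exact Nat.lt_floor_add_one _
    calc (1:ℝ) = β / 2 * (2 / β) := by field_simp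
      _ < β / 2 * ((m : ℝ) + 1) := by
          exact mul_lt_mul_of_pos_left hmgt (by positivity)
  have hη : Tendsto (fun n : ℕ => (n : ℝ) ^ (-(β / 2)) * Real.log n ^ ((1 + ε) / 2))
      atTop (𝓝 0) :=
    (aux_rpow_log_tendsto ((1 + ε) / 2) (by linarith)).comp tendsto_natCast_atTop_atTop
  have hL2 : Tendsto (fun n : ℕ => 2 * C * ((n : ℝ) *
      ((n : ℝ) ^ (-(β / 2)) * Real.log n ^ ((1 + ε) / 2)) ^ (m + 1))) atTop (𝓝 0) := by
    have base : Tendsto (fun x : ℝ => x ^ (1 + -(β / 2) * ((m : ℝ) + 1)) *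
        Real.log x ^ ((1 + ε) / 2 * ((m : ℝ) + 1))) atTop (𝓝 0) :=
      aux_rpow_log_tendsto _ (by nlinarith)
    have heq : (fun x : ℝ => x ^ (1 + -(β / 2) * ((m : ℝ) + 1)) *
        Real.log x ^ ((1 + ε) / 2 * ((m : ℝ) + 1))) =ᶠ[atTop]
        fun x : ℝ => x * ((x ^ (-(β / 2)) * Real.log x ^ ((1 + ε) / 2)) ^ (m + 1)) := by
      filter_upwards [eventually_ge_atTop (1 : ℝ)] with x hx
      have hx0 : (0:ℝ) < x := by linarith
      have hlog : 0 ≤ Real.log x := Real.log_nonneg hx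
      rw [mul_pow, ← Real.rpow_natCast (x ^ (-(β / 2))) (m + 1),
        ← Real.rpow_natCast (Real.log x ^ ((1 + ε) / 2)) (m + 1),
        ← Real.rpow_mul hx0.le, ← Real.rpow_mul hlog,
        Real.rpow_add hx0, Real.rpow_one]
      push_cast
      ring_nf
    have hre : Tendsto (fun x : ℝ =>
        x * ((x ^ (-(β / 2)) * Real.log x ^ ((1 + ε) / 2)) ^ (m + 1))) atTop (𝓝 0) :=
      base.congr' heq
    have := (hre.comp tendsto_natCast_atTop_atTop).const_mul (2 * C)
    simpa [Function.comp] using this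
  -- choose N
  have hminpos : (0:ℝ) < min δ (min ρ (1 / 2)) := lt_min hδ (lt_min hρ (by norm_num))
  have hev1 : ∀ᶠ n : ℕ in atTop,
      (n : ℝ) ^ (-(β / 2)) * Real.log n ^ ((1 + ε) / 2) < min δ (min ρ (1 / 2)) :=
    hη.eventually_lt_const hminpos
  have hev2 : ∀ᶠ n : ℕ in atTop, 2 * C * ((n : ℝ) *
      ((n : ℝ) ^ (-(β / 2)) * Real.log n ^ ((1 + ε) / 2)) ^ (m + 1)) < γ / 2 :=
    hL2.eventually_lt_const (by linarith)
  have hev3 : ∀ᶠ n : ℕ in atTop, 0 < (S n).trace := by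
    filter_upwards [hreg.eventually_const_lt (half_lt_self hc), eventually_ge_atTop 1]
      with n h1 h2
    have hn0 : (0:ℝ) < (n : ℝ) := by exact_mod_cast Nat.lt_of_lt_of_le Nat.zero_lt_one h2
    have hnb : (0:ℝ) < (n : ℝ) ^ β := Real.rpow_pos_of_pos hn0 β
    have h3 : c / 2 * (n : ℝ) ^ β < (S n).trace := (lt_div_iff₀ hnb).mp h1
    nlinarith [mul_pos (half_pos hc) hnb]
  obtain ⟨N, hN⟩ := eventually_atTop.mp (hev1.and (hev2.and hev3))
  refine ⟨N, fun n hn xs hEX v => ?_⟩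
  obtain ⟨hn1, hn2, hn3⟩ := hN n hn
  set τ := (S n).trace with hτdef
  set η := (n : ℝ) ^ (-(β / 2)) * Real.log n ^ ((1 + ε) / 2) with hηdef
  have hlogn : 0 ≤ Real.log n := by
    rcases Nat.eq_zero_or_pos n with h | h
    · simp [h]
    · exact Real.log_nonneg (by exact_mod_cast h)
  have hη0 : 0 ≤ η :=
    mul_nonneg (Real.rpow_nonneg (Nat.cast_nonneg n) _) (Real.rpow_nonneg hlogn _)
  have hηδ : η < δ := lt_of_lt_of_le hn1 (min_le_left _ _)
  have hηρ : η < ρ := lt_of_lt_of_le hn1 ((min_le_right _ _).trans (min_le_left _ _))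
  have hηh : η ≤ 1 / 2 :=
    le_of_lt (lt_of_lt_of_le hn1 ((min_le_right _ _).trans (min_le_right _ _)))
  have hτ : (0:ℝ) < τ := hn3
  have hsq : ((Real.sqrt τ)⁻¹) ^ 2 = τ⁻¹ := by
    rw [← Real.sqrt_inv, Real.sq_sqrt (inv_nonneg.mpr hτ.le)]
  have hzdot : ∀ i j : Fin n, dotp ((Real.sqrt τ)⁻¹ • xs i) ((Real.sqrt τ)⁻¹ • xs j)
      = dotp (xs i) (xs j) / τ := by
    intro i j
    unfold dotp
    have hterm : ∀ k, ((Real.sqrt τ)⁻¹ • xs i) k * ((Real.sqrt τ)⁻¹ • xs j) k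
        = τ⁻¹ * (xs i k * xs j k) := by
      intro k
      simp only [Pi.smul_apply, smul_eq_mul]
      rw [← hsq]; ring
    rw [Finset.sum_congr rfl fun k _ => hterm k, ← Finset.mul_sum, div_eq_inv_mul]
  have hzsq : ∀ i : Fin n, sqnorm ((Real.sqrt τ)⁻¹ • xs i) = dotp (xs i) (xs i) / τ :=
    fun i => hzdot i i
  have hw : ∀ i : Fin n, |dotp (xs i) (xs i) / τ - 1| ≤ η := by
    intro i
    have h := hEX i i
    simpa using h
  have hwmem : ∀ i : Fin n, dotp (xs i) (xs i) / τ ∈ Set.Icc (1 - δ) (1 + δ) := by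
    intro i
    have h := abs_le.mp (hw i)
    constructor <;> [linarith [h.1]; linarith [h.2]]
  have hoffd : ∀ i j : Fin n, i ≠ j → |dotp (xs i) (xs j) / τ| ≤ η := by
    intro i j hij
    have h := hEX i j
    rw [if_neg hij, sub_zero] at h
    exact h
  -- the entrywise bound
  have hentry : ∀ i j : Fin n,
      |((kernelMatrix (kermap g 1) (fun i => (Real.sqrt τ)⁻¹ • xs i)) -
        (Matrix.of fun i j : Fin n =>
          (if i = j then
            g 1 1 1 - ∑ q ∈ Finset.range (m + 1), gj q 1 1
          else 0) +
          ∑ q ∈ Finset.range (m + 1),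
            (dotp ((Real.sqrt τ)⁻¹ • xs i) ((Real.sqrt τ)⁻¹ • xs j)) ^ q *
              gj q (sqnorm ((Real.sqrt τ)⁻¹ • xs i))
                (sqnorm ((Real.sqrt τ)⁻¹ • xs j)))) i j| ≤
      if i = j then γ / 2 else 2 * C * η ^ (m + 1) := by
    intro i j
    rw [Matrix.sub_apply]
    have hKij : (kernelMatrix (kermap g 1) (fun i => (Real.sqrt τ)⁻¹ • xs i)) i j
        = g (dotp (xs i) (xs i) / τ) (dotp (xs j) (xs j) / τ) (dotp (xs i) (xs j) / τ) := by
      simp [kernelMatrix, kermap, hzsq, hzdot]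
    by_cases hij : i = j
    · subst hij
      rw [if_pos rfl]
      have hMii : (Matrix.of fun i j : Fin n =>
          (if i = j then
            g 1 1 1 - ∑ q ∈ Finset.range (m + 1), gj q 1 1
          else 0) +
          ∑ q ∈ Finset.range (m + 1),
            (dotp ((Real.sqrt τ)⁻¹ • xs i) ((Real.sqrt τ)⁻¹ • xs j)) ^ q *
              gj q (sqnorm ((Real.sqrt τ)⁻¹ • xs i))
                (sqnorm ((Real.sqrt τ)⁻¹ • xs j))) i i
          = (g 1 1 1 - ∑ q ∈ Finset.range (m + 1), gj q 1 1)
            + ∑ q ∈ Finset.range (m + 1), (dotp (xs i) (xs i) / τ) ^ q *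
                gj q (dotp (xs i) (xs i) / τ) (dotp (xs i) (xs i) / τ) := by
        simp [hzsq, hzdot]
      rw [hKij, hMii]
      exact hdiagbound _ (lt_of_le_of_lt (hw i) hηρ)
    · rw [if_neg hij]
      have hMij : (Matrix.of fun i j : Fin n =>
          (if i = j then
            g 1 1 1 - ∑ q ∈ Finset.range (m + 1), gj q 1 1
          else 0) +
          ∑ q ∈ Finset.range (m + 1),
            (dotp ((Real.sqrt τ)⁻¹ • xs i) ((Real.sqrt τ)⁻¹ • xs j)) ^ q *
              gj q (sqnorm ((Real.sqrt τ)⁻¹ • xs i))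
                (sqnorm ((Real.sqrt τ)⁻¹ • xs j))) i j
          = ∑ q ∈ Finset.range (m + 1), gj q (dotp (xs i) (xs i) / τ)
              (dotp (xs j) (xs j) / τ) * (dotp (xs i) (xs j) / τ) ^ q := by
        simp only [Matrix.of_apply, if_neg hij, zero_add, hzsq, hzdot]
        exact Finset.sum_congr rfl fun q _ => mul_comm _ _
      rw [hKij, hMij]
      have ht2 : |dotp (xs i) (xs j) / τ| ≤ 1 / 2 := (hoffd i j hij).trans hηh
      have htail := tail_bound hδ hsum hC m (hwmem i) (hwmem j) ht2
      refine htail.trans ?_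
      have hpow : |dotp (xs i) (xs j) / τ| ^ (m + 1) ≤ η ^ (m + 1) :=
        pow_le_pow_left₀ (abs_nonneg _) (hoffd i j hij) _
      exact mul_le_mul_of_nonneg_left hpow (by positivity)
  -- conclude via the quadratic-form bound
  calc |dotProduct v
        (((kernelMatrix (kermap g 1) (fun i => (Real.sqrt τ)⁻¹ • xs i)) -
          (Matrix.of fun i j : Fin n =>
            (if i = j then
              g 1 1 1 - ∑ q ∈ Finset.range (m + 1), gj q 1 1
            else 0) +
            ∑ q ∈ Finset.range (m + 1),
              (dotp ((Real.sqrt τ)⁻¹ • xs i) ((Real.sqrt τ)⁻¹ • xs j)) ^ q *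
                gj q (sqnorm ((Real.sqrt τ)⁻¹ • xs i))
                  (sqnorm ((Real.sqrt τ)⁻¹ • xs j)))).mulVec v)|
      ≤ (γ / 2 + n * (2 * C * η ^ (m + 1))) * ∑ i, v i ^ 2 :=
        quadform_bound _ v (γ / 2) (2 * C * η ^ (m + 1)) (by positivity) hentry
    _ ≤ γ * ∑ i, v i ^ 2 := by
        have hsumv : (0:ℝ) ≤ ∑ i, v i ^ 2 := Finset.sum_nonneg fun i _ => sq_nonneg _
        have h2C : (n : ℝ) * (2 * C * η ^ (m + 1)) ≤ γ / 2 := by nlinarith [hn2]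
        nlinarith [mul_le_mul_of_nonneg_right h2C hsumv]
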